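/- Let G be a profinite group and H a closed subgroup. The intersection of all open normal subgroups of G of index p containing H equals H·Φ^p(G), where Φ^p(G) is the intersection of all open normal subgroups of G of index p. -/

import Mathlib

/-- In a finite "elementary abelian-like" group (abelian of exponent `p`), any subgroup `K`
avoiding a point `x` is contained in an index-`p` subgroup avoiding `x`. -/
lemma keyA {V : Type*} [Group V] [Finite V] {p : ℕ} (hp : p.Prime)
    (hcomm : ∀ a b : V, a * b = b * a) (hexp : ∀ v : V, v ^ p = 1)
    (K : Subgroup V) (x : V) (hx : x ∉ K) :
    ∃ M : Subgroup V, K ≤ M ∧ x ∉ M ∧ M.index = p := by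
  haveI : Finite (Subgroup V) :=
    Finite.of_injective (fun M : Subgroup V => (M : Set V)) SetLike.coe_injective
  have hnormal : ∀ M : Subgroup V, M.Normal := fun M =>
    ⟨fun n hn g => by
      have : g * n * g⁻¹ = n := by rw [hcomm g n, mul_assoc, mul_inv_cancel, mul_one]
      rwa [this]⟩
  obtain ⟨M, hM, hmax⟩ := Set.Finite.exists_maximalFor id
    {M : Subgroup V | K ≤ M ∧ x ∉ M} (Set.toFinite _) ⟨K, le_refl K, hx⟩
  refine ⟨M, hM.1, hM.2, ?_⟩
  haveI := hnormal M
  -- every element lies in `M ⊔ ⟨x⟩`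
  have hgen : ∀ g : V, g ∈ M ⊔ Subgroup.zpowers x := by
    intro g
    by_cases hg : g ∈ M
    · exact Subgroup.mem_sup_left hg
    · have hx' : x ∈ M ⊔ Subgroup.zpowers g := by
        by_contra hxg
        have heq := @hmax (M ⊔ Subgroup.zpowers g)
          ⟨hM.1.trans le_sup_left, hxg⟩ le_sup_left
        simp only [id] at heq
        exact hg (heq (Subgroup.mem_sup_right (Subgroup.mem_zpowers g)))
      rw [← SetLike.mem_coe, Subgroup.normal_mul] at hx'
      obtain ⟨m, hm, y, hy, hxy⟩ := hx'
      obtain ⟨k, rfl⟩ := Subgroup.mem_zpowers_iff.mp hy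
      by_cases hdvd : (p : ℤ) ∣ k
      · obtain ⟨c, rfl⟩ := hdvd
        have h1 : g ^ ((p : ℤ) * c) = 1 := by
          rw [zpow_mul, zpow_natCast, hexp, one_zpow]
        refine absurd ?_ hM.2
        rw [← hxy, h1]; simpa using hm
      · have hcop : IsCoprime (p : ℤ) k :=
          ((Nat.prime_iff_prime_int.mp hp).coprime_iff_not_dvd).mpr hdvd
        obtain ⟨a, b, hab⟩ := hcop
        have hgk : g ^ k = m⁻¹ * x := by rw [← hxy, inv_mul_cancel_left]
        have hcomm' : Commute m⁻¹ x := hcomm m⁻¹ x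
        have hgeq : g = m⁻¹ ^ b * x ^ b := by
          calc g = g ^ (a * (p : ℤ) + b * k) := by rw [hab, zpow_one]
            _ = (g ^ (p : ℤ)) ^ a * (g ^ k) ^ b := by
                rw [zpow_add, mul_comm a, mul_comm b, zpow_mul, zpow_mul]
            _ = (m⁻¹ * x) ^ b := by
                rw [zpow_natCast, hexp, one_zpow, one_mul, hgk]
            _ = m⁻¹ ^ b * x ^ b := hcomm'.mul_zpow b
        rw [hgeq]
        exact mul_mem
          (Subgroup.mem_sup_left (Subgroup.zpow_mem M (inv_mem hm) b))
          (Subgroup.mem_sup_right (Subgroup.zpow_mem _ (Subgroup.mem_zpowers x) b))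
  -- compute the index
  set π := QuotientGroup.mk' M with hπdef
  have hπ : Function.Surjective π := QuotientGroup.mk'_surjective M
  have hxbar : π x ≠ 1 := by
    intro h
    exact hM.2 (by rwa [← QuotientGroup.ker_mk' M, MonoidHom.mem_ker])
  have htop : ∀ q : V ⧸ M, q ∈ Subgroup.zpowers (π x) := by
    intro q
    obtain ⟨g, rfl⟩ := hπ q
    have hg := hgen g
    rw [← SetLike.mem_coe, Subgroup.normal_mul] at hg
    obtain ⟨m, hm, y, hy, hgy⟩ := hg
    obtain ⟨k, rfl⟩ := Subgroup.mem_zpowers_iff.mp hy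
    refine Subgroup.mem_zpowers_iff.mpr ⟨k, ?_⟩
    have hm1 : π m = 1 := by rwa [← MonoidHom.mem_ker, QuotientGroup.ker_mk']
    rw [← map_zpow, ← hgy, map_mul, hm1, one_mul]
  have hord : orderOf (π x) = p := by
    have h1 : (π x) ^ p = 1 := by rw [← map_pow, hexp, map_one]
    rcases (Nat.dvd_prime hp).mp (orderOf_dvd_of_pow_eq_one h1) with h | h
    · exact absurd (orderOf_eq_one_iff.mp h) hxbar
    · exact h
  have h2 : Subgroup.zpowers (π x) = ⊤ := (Subgroup.eq_top_iff' _).mpr htop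
  calc M.index = Nat.card (V ⧸ M) := rfl
    _ = Nat.card (⊤ : Subgroup (V ⧸ M)) := (Nat.card_congr Subgroup.topEquiv.toEquiv).symm
    _ = Nat.card (Subgroup.zpowers (π x)) := by rw [h2]
    _ = orderOf (π x) := Nat.card_zpowers _
    _ = p := hord

/-- In a quotient of prime index, "commutators" vanish. -/
lemma comm_mem_of_index_prime {G : Type*} [Group G] {p : ℕ} (hp : p.Prime)
    (N : Subgroup G) [N.Normal] (hidx : N.index = p) (g h : G) :
    g * h * (h * g)⁻¹ ∈ N := by
  haveI : Fact p.Prime := ⟨hp⟩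
  have hcard : Nat.card (G ⧸ N) = p := hidx
  haveI := isCyclic_of_prime_card hcard
  letI : CommGroup (G ⧸ N) := IsCyclic.commGroup
  have h1 : ((g * h * (h * g)⁻¹ : G) : G ⧸ N) = 1 := by
    rw [QuotientGroup.mk_mul, QuotientGroup.mk_inv, QuotientGroup.mk_mul,
      QuotientGroup.mk_mul, mul_comm ((g : G ⧸ N)) (h : G ⧸ N), mul_inv_cancel]
  exact (QuotientGroup.eq_one_iff _).mp h1

/-- In a profinite group `G` with a closed subgroup `H`, the intersection of all open normal
subgroups of index `p` containing `H` equals `H · Φ^p(G)`, where `Φ^p(G)` is the intersection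
of all open normal subgroups of index `p`. -/
theorem stmt_4 (p : ℕ) (hp : p.Prime) (G : Type*) [Group G] [TopologicalSpace G]
    [IsTopologicalGroup G] [CompactSpace G] [TotallyDisconnectedSpace G]
    (H : Subgroup G) (hH : IsClosed (H : Set G)) :
    (⨅ N ∈ {N : Subgroup G | N.Normal ∧ IsOpen (N : Set G) ∧ N.index = p ∧ H ≤ N}, N)
      = H ⊔ ⨅ N ∈ {N : Subgroup G | N.Normal ∧ IsOpen (N : Set G) ∧ N.index = p}, N := by
  refine le_antisymm ?_ (le_iInf₂ fun N hN =>
    sup_le hN.2.2.2 (iInf₂_le N ⟨hN.1, hN.2.1, hN.2.2.1⟩))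
  intro x hx
  by_contra hxR
  -- the p-Frattini subgroup is normal
  haveI hΦn : (⨅ N ∈ {N : Subgroup G | N.Normal ∧ IsOpen (N : Set G) ∧ N.index = p}, N).Normal := by
    constructor
    intro n hn g
    simp only [Subgroup.mem_iInf] at hn ⊢
    intro N hN
    exact hN.1.conj_mem n (hn N hN) g
  -- compactness argument
  let ι := {N : Subgroup G // N.Normal ∧ IsOpen (N : Set G) ∧ N.index = p}
  have hHc : IsCompact ((fun h => h⁻¹ * x) '' (H : Set G)) :=
    (hH.isCompact).image (continuous_inv.mul continuous_const)
  have hempty : ((fun h => h⁻¹ * x) '' (H : Set G)) ∩ ⋂ i : ι, ((i.1 : Set G)) = ∅ := by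
    rw [Set.eq_empty_iff_forall_notMem]
    rintro y ⟨⟨h, hh, rfl⟩, hy⟩
    apply hxR
    have hyΦ : h⁻¹ * x ∈ ⨅ N ∈ {N : Subgroup G | N.Normal ∧ IsOpen (N : Set G) ∧ N.index = p}, N := by
      simp only [Subgroup.mem_iInf]
      intro N hN
      exact Set.mem_iInter.mp hy ⟨N, hN⟩
    have hxe : x = h * (h⁻¹ * x) := by group
    rw [hxe]
    exact mul_mem (Subgroup.mem_sup_left hh) (Subgroup.mem_sup_right hyΦ)
  obtain ⟨u, hu⟩ := hHc.elim_finite_subfamily_closed (fun i : ι => ((i.1 : Set G)))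
    (fun i => i.1.isClosed_of_isOpen i.2.2.1) hempty
  -- the finite intersection W
  let W : Subgroup G := ⨅ i : {i : ι // i ∈ u}, (i : ι).1
  haveI : ∀ i : {i : ι // i ∈ u}, ((i : ι).1).FiniteIndex :=
    fun i => ⟨by rw [(i : ι).2.2.2]; exact hp.ne_zero⟩
  haveI hWfi : W.FiniteIndex := Subgroup.finiteIndex_iInf this
  haveI hWn : W.Normal := by
    constructor
    intro n hn g
    simp only [W, Subgroup.mem_iInf] at hn ⊢
    intro i
    exact (i : ι).2.1.conj_mem n (hn i) g
  have hWopen : IsOpen (W : Set G) := by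
    have hWcoe : (W : Set G) = ⋂ i : {i : ι // i ∈ u}, (((i : ι).1 : Set G)) :=
      Subgroup.coe_iInf
    rw [hWcoe]
    exact isOpen_iInter_of_finite fun i => (i : ι).2.2.1
  have hgpW : ∀ g : G, g ^ p ∈ W := by
    intro g
    simp only [W, Subgroup.mem_iInf]
    intro i
    haveI := (i : ι).2.1
    haveI : ((i : ι).1).FiniteIndex := ⟨by rw [(i : ι).2.2.2]; exact hp.ne_zero⟩
    have := ((i : ι).1).pow_index_mem g
    rwa [(i : ι).2.2.2] at this
  have hxHW : x ∉ H ⊔ W := by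
    intro hmem
    rw [← SetLike.mem_coe, Subgroup.mul_normal] at hmem
    obtain ⟨h, hh, w, hw, hhw⟩ := hmem
    have hwmem : (h⁻¹ * x) ∈ ((fun h => h⁻¹ * x) '' (H : Set G)) ∩ ⋂ i ∈ u, ((i.1 : Set G)) := by
      constructor
      · exact ⟨h, hh, rfl⟩
      · rw [Set.mem_iInter₂]
        intro i hi
        have : h⁻¹ * x = w := by rw [← hhw, inv_mul_cancel_left]
        rw [this]
        exact Subgroup.mem_iInf.mp hw ⟨i, hi⟩
    rw [hu] at hwmem
    exact hwmem
  -- pass to the quotient G ⧸ W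
  haveI : Finite (G ⧸ W) := Subgroup.finite_quotient_of_finiteIndex (H := W)
  set π := QuotientGroup.mk' W with hπdef
  have hπ : Function.Surjective π := QuotientGroup.mk'_surjective W
  have hcomm : ∀ a b : G ⧸ W, a * b = b * a := by
    intro a b
    obtain ⟨g, rfl⟩ := hπ a
    obtain ⟨h', rfl⟩ := hπ b
    have key : g * h' * (h' * g)⁻¹ ∈ W := by
      simp only [W, Subgroup.mem_iInf]
      intro i
      haveI := (i : ι).2.1
      exact comm_mem_of_index_prime hp _ (i : ι).2.2.2 g h'
    have h1 : π (g * h' * (h' * g)⁻¹) = 1 := by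
      rw [← MonoidHom.mem_ker, QuotientGroup.ker_mk']; exact key
    rw [map_mul, map_inv] at h1
    have h2 : π (g * h') = π (h' * g) := mul_inv_eq_one.mp h1
    rw [map_mul, map_mul] at h2
    exact h2
  have hexp : ∀ v : G ⧸ W, v ^ p = 1 := by
    intro v
    obtain ⟨g, rfl⟩ := hπ v
    rw [← map_pow]
    rw [← MonoidHom.mem_ker, QuotientGroup.ker_mk'] at *
    exact hgpW g
  have hxK : π x ∉ Subgroup.map π H := by
    rintro ⟨h, hh, heq⟩
    apply hxHW
    have hker : h⁻¹ * x ∈ W := by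
      rw [← QuotientGroup.ker_mk' W, MonoidHom.mem_ker]
      show π (h⁻¹ * x) = 1
      rw [map_mul, map_inv, heq, inv_mul_cancel]
    have hxe : x = h * (h⁻¹ * x) := by group
    rw [hxe]
    exact mul_mem (Subgroup.mem_sup_left hh) (Subgroup.mem_sup_right hker)
  obtain ⟨M, hKM, hxM, hMidx⟩ := keyA hp hcomm hexp (Subgroup.map π H) (π x) hxK
  haveI hMn : M.Normal := by
    constructor
    intro m hm g
    have : g * m * g⁻¹ = m := by rw [hcomm g m, mul_assoc, mul_inv_cancel, mul_one]
    rwa [this]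
  have hWN : W ≤ Subgroup.comap π M := by
    intro g hg
    have h1 : π g = 1 := MonoidHom.mem_ker.mp (by rw [hπdef, QuotientGroup.ker_mk']; exact hg)
    rw [Subgroup.mem_comap, h1]
    exact one_mem M
  haveI hNn : (Subgroup.comap π M).Normal := hMn.comap π
  have hNopen : IsOpen ((Subgroup.comap π M : Subgroup G) : Set G) :=
    Subgroup.isOpen_mono hWN hWopen
  have hNidx : (Subgroup.comap π M).index = p := by
    rw [Subgroup.index_comap_of_surjective M hπ]; exact hMidx
  have hHN : H ≤ Subgroup.comap π M := Subgroup.map_le_iff_le_comap.mp hKM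
  have hxN : x ∈ Subgroup.comap π M :=
    Subgroup.mem_iInf.mp (Subgroup.mem_iInf.mp hx (Subgroup.comap π M))
      ⟨hNn, hNopen, hNidx, hHN⟩
  exact hxM hxN
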